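/- If a composition α is (i,z)-removable, then z ≤ α_i − α_{k_α(i)}, where k_α(i) = min{k > i : α_k < α_i}. -/
import Mathlib


/-- The matrix `c_{i,j}(α)` defined recursively in `j`. -/
def cmat (α : ℕ → ℕ) (i : ℕ) : ℕ → ℕ
  | 0 => 0
  | j + 1 =>
    if j + 1 ≤ i + 1 then 0
    else cmat α i j + if α j < α i - cmat α i j then 1 else 0

/-- `α` covers `α'` in position `(i,j)`: conditions (a1)–(a4). -/
def CoversAt (α α' : ℕ → ℕ) (i j : ℕ) : Prop :=
  1 ≤ i ∧ i < j ∧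
  α' i + 1 ≤ α i ∧
  α' j + α' i + 1 = α j + α i ∧
  (∀ k, k ≠ i → k ≠ j → α' k = α k) ∧
  cmat α i j = cmat α' i j ∧
  cmat α i j + α j = α' i

/-- `α` is `(i,z)`-removable. -/
def IsRemovable (α : ℕ → ℕ) (i z : ℕ) : Prop :=
  ∃ α' j, CoversAt α α' i j ∧ α' i + z = α i

/-- `J̃(i,z)`: the greatest `j > i` such that `c_{i,j}(α) = c_{i,j}(α̃)`,
where `α̃` is `α` with `α_i` replaced by `α_i - z`. -/
noncomputable def Jt (α : ℕ → ℕ) (i z : ℕ) : ℕ :=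
  sSup {j | i < j ∧ cmat α i j = cmat (Function.update α i (α i - z)) i j}

/-- `k_α(i) = min {k > i : α_k < α_i}`. -/
noncomputable def kfun (α : ℕ → ℕ) (i : ℕ) : ℕ :=
  sInf {k | i < k ∧ α k < α i}

lemma cmat_succ (α : ℕ → ℕ) (i m : ℕ) (h : i < m) :
    cmat α i (m+1) = cmat α i m + if α m < α i - cmat α i m then 1 else 0 := by
  rw [cmat, if_neg (by omega)]

lemma cmat_base (α : ℕ → ℕ) (i : ℕ) : cmat α i (i+1) = 0 := by
  rw [cmat, if_pos le_rfl]

/-- if `α` is `(i,z)`-removable then `z ≤ α_i - α_{k_α(i)}`. -/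
theorem removable_le (α : ℕ → ℕ) (hbd : ∃ m, ∀ k, m < k → α k = 0)
    (i z : ℕ) (hi : 1 ≤ i) (hz1 : 1 ≤ z) (h : IsRemovable α i z) :
    z + α (kfun α i) ≤ α i := by
  obtain ⟨α', j, ⟨hi1, hij, hdec, hsum, heq, hcc, hci⟩, hαi⟩ := h
  have hne : ∃ k, i < k ∧ α k < α i := by
    obtain ⟨m, hm⟩ := hbd
    exact ⟨m + i + 1, by omega, by rw [hm _ (by omega)]; omega⟩
  have hKmem : i < kfun α i ∧ α (kfun α i) < α i := Nat.sInf_mem hne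
  have hKmin : ∀ m, i < m → α m < α i → kfun α i ≤ m :=
    fun m h1 h2 => Nat.sInf_le ⟨h1, h2⟩
  set K := kfun α i with hKdef
  -- invariant: c' ≤ c ≤ c' + z
  have Q : ∀ m, i < m → m ≤ j →
      cmat α' i m ≤ cmat α i m ∧ cmat α i m ≤ cmat α' i m + z := by
    intro m
    induction m with
    | zero => intro h1; exact absurd h1 (Nat.not_lt_zero i)
    | succ m ih =>
      intro h1 h2
      rcases Nat.lt_or_ge i m with him | him
      · have hm' : α' m = α m := heq m (by omega) (by omega)
        have hq := ih him (by omega)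
        rw [cmat_succ α i m him, cmat_succ α' i m him, hm']
        split_ifs with h3 h4 h4 <;> omega
      · have hmi : m = i := by omega
        subst hmi
        rw [cmat_base, cmat_base]
        omega
  -- equality propagates downward from j
  have key : ∀ n m, i < m → m + n = j → cmat α i m = cmat α' i m := by
    intro n
    induction n with
    | zero => intro m h1 h2; rw [show m = j by omega]; exact hcc
    | succ n ih =>
      intro m h1 h2
      have h3 := ih (m+1) (by omega) (by omega)
      have hq := Q m h1 (by omega)
      have hm' : α' m = α m := heq m (by omega) (by omega)
      rw [cmat_succ α i m h1, cmat_succ α' i m h1, hm'] at h3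
      split_ifs at h3 <;> omega
  -- cmat vanishes up to K
  have hzero : ∀ m, i < m → m ≤ K → cmat α i m = 0 := by
    intro m
    induction m with
    | zero => intro h1; exact absurd h1 (Nat.not_lt_zero i)
    | succ m ih =>
      intro h1 h2
      rcases Nat.lt_or_ge i m with him | him
      · have h0 := ih him (by omega)
        rw [cmat_succ α i m him, h0]
        have hge : ¬ α m < α i := fun hc => by have := hKmin m him hc; omega
        simp [hge]
      · have hmi : m = i := by omega
        rw [hmi]; exact cmat_base α i
  rcases Nat.lt_or_ge K j with hKj | hKj
  · -- K < j : compare the increments at step K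
    have hcK : cmat α i K = 0 := hzero K hKmem.1 le_rfl
    have hcK' : cmat α i K = cmat α' i K := key (j - K) K hKmem.1 (by omega)
    have hcK'' : cmat α' i K = 0 := by rw [← hcK']; exact hcK
    have hstep := key (j - (K+1)) (K+1) (by omega) (by omega)
    have hm' : α' K = α K := heq K (by omega) (by omega)
    rw [cmat_succ α i K hKmem.1, cmat_succ α' i K hKmem.1, hm', hcK, hcK''] at hstep
    have hαK := hKmem.2
    split_ifs at hstep with h3 h4 <;> omega
  · -- j ≤ K
    have hcj : cmat α i j = 0 := hzero j (by omega) hKj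
    rw [hcj] at hci
    rcases Nat.lt_or_ge j K with hlt | hge
    · exfalso
      have hge' : ¬ α j < α i := fun hc => by have := hKmin j (by omega) hc; omega
      omega
    · have hjK : j = K := by omega
      have hKa : α j = α K := by rw [hjK]
      omega
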